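/- Let n ≥ 1 and work in ℤ[γ_1,…,γ_n]. Set γ̄ = γ_1+⋯+γ_n and γ̃_i = γ̄+γ_i for each i. Then: (i) h_2^n = ∑_{k=0}^{2} (−1)^{2−k} C(n+1, 2−k) ∑_{1≤i_1≤⋯≤i_k≤n−1} γ̃_{i_1}⋯γ̃_{i_k}·γ̄^{2−k}; and (ii) for every 3 ≤ l ≤ n, h_l^{n−l+2} = ∑_{k=0}^{l} (−1)^{l−k} C(n+1, l−k) ∑_{1≤i_1≤⋯≤i_k≤n−l+2} γ̃_{i_1}⋯γ̃_{i_k}·γ̄^{l−k}, where the inner sums run over weakly increasing index sequences (multisets) in the stated range. -/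

import Mathlib

open MvPolynomial

/-- `hpoly n a b` is the sum of all monomials of degree `a` in the first `b`
variables `γ_1, …, γ_b` of `ℤ[γ_1,…,γ_n]`: the complete homogeneous symmetric
polynomial `h_a^b`. -/
noncomputable def hpoly (n a b : ℕ) : MvPolynomial (Fin n) ℤ :=
  ∑ μ ∈ Finset.univ.filter (fun μ : Sym (Fin n) a => ∀ i ∈ μ.1, (i : ℕ) < b),
    (μ.1.map X).prod

/-- `γ̄ = γ_1 + ⋯ + γ_n`. -/
noncomputable def gammaBar (n : ℕ) : MvPolynomial (Fin n) ℤ := ∑ j : Fin n, X j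

/-- `γ̃_i = γ̄ + γ_i`. -/
noncomputable def gammaTilde (n : ℕ) (i : Fin n) : MvPolynomial (Fin n) ℤ :=
  gammaBar n + X i

section Helpers

open Finset

variable {α R : Type*} [DecidableEq α] [CommRing R]

variable {α R : Type*} [DecidableEq α] [CommRing R]

noncomputable def symSum (f : α → R) (s : Finset α) (k : ℕ) : R :=
  ∑ μ ∈ s.sym k, (μ.val.map f).prod

lemma symSum_zero (f : α → R) (s : Finset α) : symSum f s 0 = 1 := by
  rw [symSum, Finset.sym_zero, Finset.sum_singleton]
  show (Multiset.map f (0 : Multiset α)).prod = 1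
  simp

lemma symSum_empty (f : α → R) (k : ℕ) : symSum f (∅ : Finset α) (k+1) = 0 := by
  simp [symSum, Finset.sym_empty]

lemma symSum_fill (f : α → R) {a : α} {s : Finset α} (ha : a ∉ s) (k : ℕ) :
    symSum f (insert a s) k = ∑ i ∈ range (k+1), f a ^ i * symSum f s (k - i) := by
  unfold symSum
  rw [← Finset.sum_attach ((insert a s).sym k), Finset.attach_eq_univ,
    ← Equiv.sum_comp (Finset.symInsertEquiv ha).symm, ← Finset.univ_sigma_univ, Finset.sum_sigma,
    ← Fin.sum_univ_eq_sum_range]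
  refine Finset.sum_congr rfl fun i _ => ?_
  rw [Finset.mul_sum, ← Finset.sum_attach (s.sym (k - i)), Finset.attach_eq_univ]
  refine Finset.sum_congr rfl fun μ _ => ?_
  simp only [Finset.symInsertEquiv_symm_apply_coe]
  rw [show (Sym.fill a i (↑μ : Sym α (k - ↑i))).val
      = (↑μ : Sym α (k - ↑i)).val + Multiset.replicate (↑i) a from rfl]
  rw [Multiset.map_add, Multiset.prod_add, Multiset.map_replicate, Multiset.prod_replicate]
  ring

lemma symSum_succ {a : α} {s : Finset α} (ha : a ∉ s) (f : α → R) (k : ℕ) :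
    symSum f (insert a s) (k+1)
      = symSum f s (k+1) + f a * symSum f (insert a s) k := by
  rw [symSum_fill f ha (k+1), symSum_fill f ha k, Finset.sum_range_succ',
    Finset.mul_sum]
  simp only [pow_zero, one_mul, Nat.sub_zero, pow_succ]
  rw [add_comm]
  congr 1
  refine Finset.sum_congr rfl fun i _ => ?_
  have : k + 1 - (i + 1) = k - i := by omega
  rw [this]; ring

lemma symSum_one (f : α → R) (s : Finset α) : symSum f s 1 = ∑ i ∈ s, f i := by
  induction s using Finset.cons_induction with
  | empty => simpa using symSum_empty f 0
  | cons a s ha ih =>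
    rw [Finset.cons_eq_insert, symSum_succ ha f 0, symSum_zero, ih,
      Finset.sum_insert ha]
    ring

lemma symSum_key (f : α → R) (c : R) :
    ∀ (k : ℕ) (s : Finset α),
      symSum (fun i => f i + c) s k
        = ∑ j ∈ Finset.range (k+1),
            ((s.card + k - 1).choose j : R) * c ^ j * symSum f s (k - j) := by
  intro k
  induction k with
  | zero => intro s; simp [symSum_zero]
  | succ k IHk =>
    intro s
    induction s using Finset.cons_induction with
    | empty =>
      rw [symSum_empty]
      rw [Finset.sum_range_succ]
      have h1 : (∅ : Finset α).card + (k+1) - 1 = k := by simp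
      rw [h1]
      simp only [Nat.sub_self, symSum_zero, Nat.choose_succ_self, Nat.cast_zero, zero_mul,
        mul_one, zero_add]
      rw [Finset.sum_eq_zero]
      · ring
      intro j hj
      rw [Finset.mem_range] at hj
      have : k + 1 - j = (k - j) + 1 := by omega
      rw [this, symSum_empty]
      ring
    | cons a s ha IHs =>
      rw [Finset.cons_eq_insert, symSum_succ ha _ k, IHs, IHk (insert a s)]
      rw [Finset.card_insert_of_notMem ha]
      have c1 : #s + (k+1) - 1 = #s + k := by omega
      have c2 : #s + 1 + k - 1 = #s + k := by omega
      have c3 : #s + 1 + (k+1) - 1 = #s + k + 1 := by omega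
      rw [c1, c2, c3]
      have hrec : ∀ m : ℕ, symSum f s (m+1)
          = symSum f (insert a s) (m+1) - f a * symSum f (insert a s) m := by
        intro m; rw [symSum_succ ha f m]; ring
      have hA : ∑ j ∈ Finset.range (k+1+1),
            ((#s + k).choose j : R) * c ^ j * symSum f s (k+1-j)
          = (∑ j ∈ Finset.range (k+1),
            ((#s + k).choose j : R) * c ^ j * symSum f s (k+1-j))
            + ((#s + k).choose (k+1) : R) * c ^ (k+1) * symSum f s 0 := by
        rw [Finset.sum_range_succ]; simp
      have hB : ∑ j ∈ Finset.range (k+1),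
            ((#s + k).choose j : R) * c ^ j * symSum f s (k+1-j)
          = (∑ j ∈ Finset.range (k+1),
              ((#s + k).choose j : R) * c ^ j * symSum f (insert a s) (k+1-j))
            - f a * ∑ j ∈ Finset.range (k+1),
              ((#s + k).choose j : R) * c ^ j * symSum f (insert a s) (k-j) := by
        rw [Finset.mul_sum, ← Finset.sum_sub_distrib]
        refine Finset.sum_congr rfl fun j hj => ?_
        rw [Finset.mem_range] at hj
        have e : k + 1 - j = (k - j) + 1 := by omega
        rw [e, hrec (k - j)]
        ring
      have hC : ∑ j ∈ Finset.range (k+1+1),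
            ((#s + k + 1).choose j : R) * c ^ j * symSum f (insert a s) (k+1-j)
          = ((#s + k + 1).choose 0 : R) * c ^ 0 * symSum f (insert a s) (k+1-0)
            + ∑ j ∈ Finset.range (k+1),
              ((#s + k + 1).choose (j+1) : R) * c ^ (j+1) * symSum f (insert a s) (k+1-(j+1)) := by
        rw [Finset.sum_range_succ']; ring
      have hD : ∑ j ∈ Finset.range (k+1),
            ((#s + k + 1).choose (j+1) : R) * c ^ (j+1) * symSum f (insert a s) (k+1-(j+1))
          = (∑ j ∈ Finset.range (k+1),
              ((#s + k).choose (j+1) : R) * c ^ (j+1) * symSum f (insert a s) (k-j))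
            + c * ∑ j ∈ Finset.range (k+1),
              ((#s + k).choose j : R) * c ^ j * symSum f (insert a s) (k-j) := by
        rw [Finset.mul_sum, ← Finset.sum_add_distrib]
        refine Finset.sum_congr rfl fun j hj => ?_
        have e : k + 1 - (j+1) = k - j := by omega
        rw [e, Nat.choose_succ_succ (#s + k) j]
        push_cast
        ring
      have hE : ∑ j ∈ Finset.range (k+1+1),
            ((#s + k).choose j : R) * c ^ j * symSum f (insert a s) (k+1-j)
          = ((#s + k).choose 0 : R) * c ^ 0 * symSum f (insert a s) (k+1-0)
            + ∑ j ∈ Finset.range (k+1),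
              ((#s + k).choose (j+1) : R) * c ^ (j+1) * symSum f (insert a s) (k+1-(j+1)) := by
        rw [Finset.sum_range_succ']; ring
      have hE' : ∑ j ∈ Finset.range (k+1),
            ((#s + k).choose (j+1) : R) * c ^ (j+1) * symSum f (insert a s) (k+1-(j+1))
          = ∑ j ∈ Finset.range (k+1),
            ((#s + k).choose (j+1) : R) * c ^ (j+1) * symSum f (insert a s) (k-j) := by
        refine Finset.sum_congr rfl fun j hj => ?_
        have e : k + 1 - (j+1) = k - j := by omega
        rw [e]
      have hF : ∑ j ∈ Finset.range (k+1+1),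
            ((#s + k).choose j : R) * c ^ j * symSum f (insert a s) (k+1-j)
          = (∑ j ∈ Finset.range (k+1),
              ((#s + k).choose j : R) * c ^ j * symSum f (insert a s) (k+1-j))
            + ((#s + k).choose (k+1) : R) * c ^ (k+1) * symSum f (insert a s) 0 := by
        rw [Finset.sum_range_succ]; simp
      rw [symSum_zero] at hA hF
      rw [hE'] at hE
      rw [hA, hB, hC, hD]
      simp only [Nat.sub_zero, Nat.choose_zero_right, Nat.cast_one, pow_zero, one_mul]
      have hG : ∑ j ∈ Finset.range (k+1),
            ((#s + k).choose (j+1) : R) * c ^ (j+1) * symSum f (insert a s) (k-j)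
          = (∑ j ∈ Finset.range (k+1),
              ((#s + k).choose j : R) * c ^ j * symSum f (insert a s) (k+1-j))
            + ((#s + k).choose (k+1) : R) * c ^ (k+1)
            - symSum f (insert a s) (k+1) := by
        have h := hF
        rw [hE] at h
        simp only [Nat.sub_zero, Nat.choose_zero_right, Nat.cast_one, pow_zero, one_mul] at h
        linear_combination h
      rw [hG]
      ring

lemma sym_map_val {β : Type*} {k : ℕ} (f : α → β) (s : Sym α k) :
    (Sym.map f s).val = Multiset.map f s.val := rfl

lemma tsum_eq {n b : ℕ} (h : b ≤ n) (g : Fin n → R) (k : ℕ) :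
    (∑ μ : Sym (Fin b) k, (μ.1.map fun i => g (Fin.castLE h i)).prod)
      = symSum g (Finset.univ.filter fun i : Fin n => (i : ℕ) < b) k := by
  unfold symSum
  have hright : ∀ (μ : Sym (Fin n) k) (hc : ∀ x : Fin n, x ∈ μ.val → (x : ℕ) < b),
      Sym.map (Fin.castLE h)
        (⟨Multiset.map (fun x => (⟨(x.1 : ℕ), hc x.1 x.2⟩ : Fin b)) μ.val.attach,
          by simp⟩ : Sym (Fin b) k) = μ := by
    intro μ hc
    apply Subtype.ext
    change Multiset.map (Fin.castLE h)
      (Multiset.map (fun x => (⟨(x.1 : ℕ), hc x.1 x.2⟩ : Fin b)) μ.val.attach) = μ.val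
    rw [Multiset.map_map]
    exact Multiset.attach_map_val _
  have hmem : ∀ (ν : Sym (Fin b) k) (x : Fin n),
      x ∈ (Sym.map (Fin.castLE h) ν).val → (x : ℕ) < b := by
    intro ν x hx
    rw [sym_map_val] at hx
    obtain ⟨y, _, rfl⟩ := Multiset.mem_map.1 hx
    exact y.isLt
  refine Finset.sum_bij'
    (fun (μ : Sym (Fin b) k) _ => Sym.map (Fin.castLE h) μ)
    (fun μ hμ => (⟨μ.val.attach.map
        (fun x => (⟨(x.1 : ℕ), by
          have := Finset.mem_sym_iff.1 hμ x.1 x.2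
          simpa using this⟩ : Fin b)), by simp⟩ : Sym (Fin b) k))
    ?_ ?_ ?_ ?_ ?_
  · intro μ _
    rw [Finset.mem_sym_iff]
    intro a ha
    rw [Sym.mem_map] at ha
    obtain ⟨x, _, rfl⟩ := ha
    simp [Fin.castLE]
  · intro μ hμ; exact Finset.mem_univ _
  · intro μ hm
    apply Sym.map_injective (Fin.castLE_injective h) k
    exact hright _ (hmem μ)
  · intro μ hμ
    exact hright μ (fun x hx => by simpa using Finset.mem_sym_iff.1 hμ x hx)
  · intro μ _
    rw [sym_map_val, Multiset.map_map]
    rfl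

lemma altsum_trinomial (p l : ℕ) (hl1 : 1 ≤ l) (hlp : l ≤ p) :
    ∑ m ∈ Finset.range (l+1), (-1 : ℤ) ^ m * (p.choose m) * ((p - m).choose (l - m)) = 0 := by
  have step : ∀ m ∈ Finset.range (l+1),
      (-1 : ℤ) ^ m * (p.choose m) * ((p - m).choose (l - m))
        = (p.choose l) * ((-1 : ℤ) ^ m * (l.choose m)) := by
    intro m hm
    rw [Finset.mem_range] at hm
    have hml : m ≤ l := by omega
    have := Nat.choose_mul (n := p) hml
    have h2 : (p.choose m : ℤ) * ((p - m).choose (l - m)) = (p.choose l) * (l.choose m) := by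
      exact_mod_cast congrArg (Nat.cast : ℕ → ℤ) this.symm
    calc (-1 : ℤ) ^ m * (p.choose m) * ((p - m).choose (l - m))
        = (-1 : ℤ) ^ m * ((p.choose m : ℤ) * ((p - m).choose (l - m))) := by ring
      _ = (-1 : ℤ) ^ m * ((p.choose l : ℤ) * (l.choose m)) := by rw [h2]
      _ = (p.choose l) * ((-1 : ℤ) ^ m * (l.choose m)) := by ring
  rw [Finset.sum_congr rfl step, ← Finset.mul_sum,
    Int.alternating_sum_range_choose_of_ne (by omega : l ≠ 0), mul_zero]

lemma inversion (p l : ℕ) (hlp : l ≤ p) (u : ℕ → R) :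
    ∑ m ∈ Finset.range (l+1), (-1 : R) ^ m * (p.choose m : R) *
      (∑ j ∈ Finset.range (l - m + 1), ((p - m).choose j : R) * u (m + j)) = u 0 := by
  induction l with
  | zero => simp
  | succ l IH =>
    have hlp' : l ≤ p := by omega
    rw [Finset.sum_range_succ]
    have split : ∀ m ∈ Finset.range (l+1),
        (-1 : R) ^ m * (p.choose m : R) *
          (∑ j ∈ Finset.range (l + 1 - m + 1), ((p - m).choose j : R) * u (m + j))
        = (-1 : R) ^ m * (p.choose m : R) *
            (∑ j ∈ Finset.range (l - m + 1), ((p - m).choose j : R) * u (m + j))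
          + (-1 : R) ^ m * (p.choose m : R) * (((p - m).choose (l + 1 - m) : R) * u (l + 1)) := by
      intro m hm
      rw [Finset.mem_range] at hm
      have e : l + 1 - m + 1 = (l - m + 1) + 1 := by omega
      rw [e, Finset.sum_range_succ]
      have e2 : l - m + 1 = l + 1 - m := by omega
      have e3 : m + (l + 1 - m) = l + 1 := by omega
      rw [e2, e3]
      ring
    rw [Finset.sum_congr rfl split, Finset.sum_add_distrib, IH hlp']
    have last : (-1 : R) ^ (l+1) * ((p.choose (l+1)) : R) *
        (∑ j ∈ Finset.range (l + 1 - (l+1) + 1), ((p - (l+1)).choose j : R) * u ((l+1) + j))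
        = (-1 : R) ^ (l+1) * (p.choose (l+1) : R) * (((p - (l+1)).choose (l + 1 - (l+1)) : R) * u (l + 1)) := by
      have e : l + 1 - (l + 1) = 0 := by omega
      rw [e]
      simp
    rw [last]
    have comb : (∑ m ∈ Finset.range (l+1),
          (-1 : R) ^ m * (p.choose m : R) * (((p - m).choose (l + 1 - m) : R) * u (l + 1)))
        + (-1 : R) ^ (l+1) * (p.choose (l+1) : R) * (((p - (l+1)).choose (l + 1 - (l+1)) : R) * u (l + 1))
        = (∑ m ∈ Finset.range (l+1+1),
            ((-1 : R) ^ m * (p.choose m : R) * ((p - m).choose (l + 1 - m) : R))) * u (l + 1) := by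
      rw [Finset.sum_mul, Finset.sum_range_succ _ (l+1)]
      congr 1
      · exact Finset.sum_congr rfl fun m hm => by ring
      · ring
    rw [add_assoc, comb]
    have hz : (∑ m ∈ Finset.range (l+1+1),
        ((-1 : R) ^ m * (p.choose m : R) * ((p - m).choose (l + 1 - m) : R))) = 0 := by
      have := altsum_trinomial p (l+1) (by omega) hlp
      have : ((∑ m ∈ Finset.range (l+1+1),
          (-1 : ℤ) ^ m * (p.choose m) * ((p - m).choose (l + 1 - m)) : ℤ) : R) = ((0 : ℤ) : R) := by
        exact_mod_cast congrArg (Int.cast : ℤ → R) this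
      push_cast at this
      convert this using 2
    rw [hz, zero_mul, add_zero]

lemma card_filter_lt (n b : ℕ) (h : b ≤ n) :
    (Finset.univ.filter fun i : Fin n => (i : ℕ) < b).card = b := by
  have : (Finset.univ.filter fun i : Fin n => (i : ℕ) < b)
      = Finset.map (Fin.castLEEmb h) Finset.univ := by
    ext i
    simp only [Finset.mem_filter, Finset.mem_univ, true_and, Finset.mem_map,
      Fin.castLEEmb_apply]
    constructor
    · intro hi
      exact ⟨⟨(i : ℕ), hi⟩, by ext; simp⟩
    · rintro ⟨a, rfl⟩
      simpa using a.isLt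
  rw [this, Finset.card_map, Finset.card_univ, Fintype.card_fin]

lemma choose2_id (n : ℕ) : (n+1).choose 2 + n.choose 2 = n * n := by
  induction n with
  | zero => rfl
  | succ n IH =>
    have h1 : (n+1+1).choose 2 = (n+1).choose 1 + (n+1).choose 2 := Nat.choose_succ_succ _ _
    have h2 : (n+1).choose 2 = n.choose 1 + n.choose 2 := Nat.choose_succ_succ _ _
    simp only [Nat.choose_one_right] at h1 h2
    nlinarith [IH, h1, h2]

lemma hpoly_eq (n a b : ℕ) :
    hpoly n a b = symSum X (Finset.univ.filter fun i : Fin n => (i : ℕ) < b) a := by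
  unfold hpoly symSum
  apply Finset.sum_congr
  · ext μ
    simp [Finset.mem_sym_iff, Sym.mem_coe]
  · intros; rfl

lemma gammaTilde_eq (n : ℕ) : gammaTilde n = fun i => X i + gammaBar n :=
  funext fun i => add_comm _ _

lemma inversion' (p l : ℕ) (hlp : l ≤ p) (u : ℕ → R) :
    ∑ k ∈ Finset.range (l+1), (-1 : R) ^ (l - k) * (p.choose (l - k) : R) *
      (∑ j ∈ Finset.range (k + 1), ((p - (l - k)).choose j : R) * u ((l - k) + j)) = u 0 := by
  rw [← Finset.sum_range_reflect]
  refine (Finset.sum_congr rfl fun m hm => ?_).trans (inversion p l hlp u)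
  rw [Finset.mem_range] at hm
  have e : l + 1 - 1 - m = l - m := by omega
  rw [e]
  have e2 : l - (l - m) = m := by omega
  rw [e2]

lemma part_two (n : ℕ) (hn : 1 ≤ n) (l : ℕ) (hl3 : 3 ≤ l) (hln : l ≤ n) :
    hpoly n l (n - l + 2)
      = ∑ k ∈ Finset.range (l + 1),
          C ((-1 : ℤ) ^ (l - k) * ((n + 1).choose (l - k) : ℤ)) *
            (∑ μ : Sym (Fin (n - l + 2)) k,
              (μ.1.map fun i => gammaTilde n (Fin.castLE (Nat.le_of_lt_succ (by omega)) i)).prod) *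
            gammaBar n ^ (l - k) := by
  have hb : n - l + 2 ≤ n := by omega
  set s : Finset (Fin n) := Finset.univ.filter (fun i : Fin n => (i : ℕ) < n - l + 2) with hs
  set u : ℕ → MvPolynomial (Fin n) ℤ :=
    fun r => gammaBar n ^ r * symSum X s (l - r) with hu
  have hcard : s.card = n - l + 2 := card_filter_lt n _ hb
  have step : ∀ k ∈ Finset.range (l + 1),
      C ((-1 : ℤ) ^ (l - k) * ((n + 1).choose (l - k) : ℤ)) *
          (∑ μ : Sym (Fin (n - l + 2)) k,
            (μ.1.map fun i => gammaTilde n (Fin.castLE hb i)).prod) *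
          gammaBar n ^ (l - k)
        = (-1 : MvPolynomial (Fin n) ℤ) ^ (l - k) * (((n+1).choose (l - k) : ℕ) : MvPolynomial (Fin n) ℤ) *
            (∑ j ∈ Finset.range (k + 1),
              ((((n+1) - (l - k)).choose j : ℕ) : MvPolynomial (Fin n) ℤ) * u ((l - k) + j)) := by
    intro k hk
    rw [Finset.mem_range] at hk
    have hkl : k ≤ l := by omega
    rw [tsum_eq hb (gammaTilde n) k, gammaTilde_eq n, ← hs,
      symSum_key X (gammaBar n) k s, hcard]
    have e1 : n - l + 2 + k - 1 = n + 1 - (l - k) := by omega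
    rw [e1]
    rw [Finset.mul_sum, Finset.mul_sum, Finset.sum_mul]
    refine Finset.sum_congr rfl fun j hj => ?_
    rw [Finset.mem_range] at hj
    rw [hu]
    dsimp only
    have e2 : l - (l - k + j) = k - j := by omega
    rw [e2, pow_add]
    rw [map_mul, map_pow, map_neg, map_one, map_natCast]
    ring
  rw [Finset.sum_congr rfl step, inversion' (n+1) l (by omega) u, hpoly_eq n l, ← hs, hu]
  simp

lemma part_one (n : ℕ) (hn : 1 ≤ n) :
    hpoly n 2 n
      = ∑ k ∈ Finset.range 3,
          C ((-1 : ℤ) ^ (2 - k) * ((n + 1).choose (2 - k) : ℤ)) *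
            (∑ μ : Sym (Fin (n - 1)) k,
              (μ.1.map fun i => gammaTilde n (Fin.castLE (Nat.sub_le n 1) i)).prod) *
            gammaBar n ^ (2 - k) := by
  have hb : n - 1 ≤ n := Nat.sub_le n 1
  set sB : Finset (Fin n) := Finset.univ.filter (fun i : Fin n => (i : ℕ) < n - 1) with hsB
  have hcard : sB.card = n - 1 := card_filter_lt n _ hb
  set m : Fin n := ⟨n - 1, by omega⟩ with hmdef
  have hm : m ∉ sB := by simp [hsB, hmdef]
  have hsplit : (Finset.univ.filter fun i : Fin n => (i : ℕ) < n) = insert m sB := by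
    ext i
    simp only [Finset.mem_filter, Finset.mem_univ, true_and, Finset.mem_insert, hsB, hmdef,
      Fin.ext_iff]
    constructor
    · intro _
      have := i.isLt
      omega
    · intro _
      exact i.isLt
  have hGam : gammaBar n = ∑ i ∈ (Finset.univ.filter fun i : Fin n => (i : ℕ) < n), X i := by
    rw [gammaBar]
    refine (Finset.sum_congr ?_ fun _ _ => rfl).symm
    exact Finset.filter_true_of_mem fun i _ => i.isLt
  have hXm : gammaBar n = symSum X sB 1 + X m := by
    rw [hGam, hsplit, Finset.sum_insert hm, symSum_one]
    ring
  have hL : hpoly n 2 n = symSum X sB 2 + X m * gammaBar n := by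
    rw [hpoly_eq n 2 n, hsplit, show (2:ℕ) = 1 + 1 from rfl, symSum_succ hm X 1]
    congr 1
    rw [symSum_one, ← hsplit, ← hGam]
  have e1 : n - 1 + 1 - 1 = n - 1 := by omega
  have e2 : n - 1 + 2 - 1 = n := by omega
  have hT1 : symSum (fun i => X i + gammaBar n) sB 1
      = symSum X sB 1 + ((n - 1 : ℕ) : MvPolynomial (Fin n) ℤ) * gammaBar n := by
    rw [symSum_key X (gammaBar n) 1 sB, hcard, e1, Finset.sum_range_succ, Finset.sum_range_one]
    simp [symSum_zero]
  have hT2 : symSum (fun i => X i + gammaBar n) sB 2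
      = symSum X sB 2 + (n : MvPolynomial (Fin n) ℤ) * gammaBar n * symSum X sB 1
        + ((n.choose 2 : ℕ) : MvPolynomial (Fin n) ℤ) * gammaBar n ^ 2 := by
    rw [symSum_key X (gammaBar n) 2 sB, hcard, e2, Finset.sum_range_succ, Finset.sum_range_succ,
      Finset.sum_range_one]
    simp [symSum_zero]
  rw [hL]
  rw [Finset.sum_range_succ, Finset.sum_range_succ, Finset.sum_range_one]
  rw [tsum_eq hb (gammaTilde n) 0, tsum_eq hb (gammaTilde n) 1, tsum_eq hb (gammaTilde n) 2,
    gammaTilde_eq n, ← hsB]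
  rw [symSum_zero, hT1, hT2]
  norm_num
  have hch : (((n+1).choose 2 : ℕ) : MvPolynomial (Fin n) ℤ)
      + ((n.choose 2 : ℕ) : MvPolynomial (Fin n) ℤ) = (n : MvPolynomial (Fin n) ℤ) * n := by
    exact_mod_cast congrArg (Nat.cast : ℕ → MvPolynomial (Fin n) ℤ) (choose2_id n)
  have hcast : ((n - 1 : ℕ) : MvPolynomial (Fin n) ℤ) = (n : MvPolynomial (Fin n) ℤ) - 1 := by
    rw [Nat.cast_sub hn, Nat.cast_one]
  rw [hcast, hXm]
  linear_combination (-((symSum X sB 1 + X m))^2) * hch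

end Helpers

/-- For `n ≥ 1`, with `γ̄ = γ_1+⋯+γ_n` and `γ̃_i = γ̄+γ_i`:
(i) `h_2^n = ∑_{k=0}^{2} (−1)^{2−k} C(n+1, 2−k) ∑_{1≤i_1≤⋯≤i_k≤n−1} γ̃_{i_1}⋯γ̃_{i_k}·γ̄^{2−k}`;
(ii) for `3 ≤ l ≤ n`,
`h_l^{n−l+2} = ∑_{k=0}^{l} (−1)^{l−k} C(n+1, l−k) ∑_{1≤i_1≤⋯≤i_k≤n−l+2} γ̃_{i_1}⋯γ̃_{i_k}·γ̄^{l−k}`,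
the inner sums over weakly increasing sequences (size-`k` multisets) in the stated range. -/
theorem hpoly_in_tilde_basis (n : ℕ) (hn : 1 ≤ n) :
    (hpoly n 2 n
      = ∑ k ∈ Finset.range 3,
          C ((-1 : ℤ) ^ (2 - k) * ((n + 1).choose (2 - k) : ℤ)) *
            (∑ μ : Sym (Fin (n - 1)) k,
              (μ.1.map fun i => gammaTilde n (Fin.castLE (Nat.sub_le n 1) i)).prod) *
            gammaBar n ^ (2 - k)) ∧
    (∀ l : ℕ, ∀ _hl3 : 3 ≤ l, ∀ _hln : l ≤ n,
      hpoly n l (n - l + 2)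
        = ∑ k ∈ Finset.range (l + 1),
            C ((-1 : ℤ) ^ (l - k) * ((n + 1).choose (l - k) : ℤ)) *
              (∑ μ : Sym (Fin (n - l + 2)) k,
                (μ.1.map fun i => gammaTilde n (Fin.castLE (by omega) i)).prod) *
              gammaBar n ^ (l - k)) := by
  exact ⟨part_one n hn, fun l hl3 hln => part_two n hn l hl3 hln⟩
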